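/- The function (s,v) \mapsto (3v/(\pi\sqrt{2} s^2)) \exp(-2(v^2 - v + 1)/s) \int_0^{4v/s} e^{-3\theta/2}(\pi\theta)^{-1/2} d\theta is a probability density on (0,\infty)^2, and its second marginal is (3/(2\pi)) v^{3/2}/(1+v^3). -/

import Mathlib

open Real MeasureTheory

/-- McKean's joint density of (T₁, V₁/c). -/
noncomputable def mcKean (s v : ℝ) : ℝ :=
  (3 * v / (π * Real.sqrt 2 * s ^ 2)) * Real.exp (-2 * (v ^ 2 - v + 1) / s) *
    ∫ θ in Set.Ioc (0:ℝ) (4 * v / s), Real.exp (-3 * θ / 2) * (π * θ) ^ (-(1:ℝ)/2)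

open Set


lemma intexp {a : ℝ} (ha : 0 < a) (c : ℝ) :
    ∫ u in Ioi c, Real.exp (-(a * u)) = Real.exp (-(a * c)) / a := by
  have key : ∀ x : ℝ, HasDerivAt (fun u => -Real.exp (-(a * u)) / a) (Real.exp (-(a * x))) x := by
    intro x
    have h1 : HasDerivAt (fun u : ℝ => -(a * u)) (-a) x := by
      simpa using (hasDerivAt_neg x).const_mul a
    have h2 := (h1.exp).neg.div_const a
    refine h2.congr_deriv ?_
    field_simp
  have hlim : Filter.Tendsto (fun u : ℝ => -Real.exp (-(a * u)) / a) Filter.atTop (nhds 0) := by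
    have h : Filter.Tendsto (fun u : ℝ => -(a * u)) Filter.atTop Filter.atBot := by
      exact Filter.tendsto_neg_atBot_iff.mpr
        (Filter.Tendsto.const_mul_atTop ha Filter.tendsto_id)
    have := (Real.tendsto_exp_atBot.comp h).neg.div_const a
    simpa using this
  have hint : IntegrableOn (fun u => Real.exp (-(a * u))) (Ioi c) := by
    simpa [neg_mul] using exp_neg_integrableOn_Ioi c ha
  have := integral_Ioi_of_hasDerivAt_of_tendsto
    (key c).continuousAt.continuousWithinAt (fun x _ => key x) hint hlim
  rw [this]; field_simp; ring


lemma intB {a S : ℝ} (ha : 0 < a) (hS : 0 < S) :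
    ∫ s in Ioc (0:ℝ) S, Real.exp (-(a / s)) / s ^ 2 = Real.exp (-(a / S)) / a := by
  have key := integral_comp_rpow_Ioi (g := (Ici S⁻¹).indicator (fun u => Real.exp (-(a * u))))
    (p := (-1:ℝ)) (by norm_num)
  have hL : (∫ x in Ioi (0:ℝ), (|(-1:ℝ)| * x ^ ((-1:ℝ) - 1)) •
      (Ici S⁻¹).indicator (fun u => Real.exp (-(a * u))) (x ^ (-1:ℝ)))
      = ∫ s in Ioc (0:ℝ) S, Real.exp (-(a / s)) / s ^ 2 := by
    rw [show (∫ s in Ioc (0:ℝ) S, Real.exp (-(a / s)) / s ^ 2)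
        = ∫ x in Ioi (0:ℝ), (Ioc (0:ℝ) S).indicator (fun s => Real.exp (-(a / s)) / s ^ 2) x from ?_]
    · apply setIntegral_congr_fun measurableSet_Ioi
      intro x hx
      have hx0 : (0:ℝ) < x := hx
      have hinv : x ^ (-1:ℝ) = x⁻¹ := Real.rpow_neg_one x
      have h2 : x ^ ((-1:ℝ) - 1) = (x ^ 2)⁻¹ := by
        rw [show ((-1:ℝ) - 1) = -(2:ℝ) by norm_num, Real.rpow_neg hx0.le]
        norm_num
      simp only [hinv, h2]
      by_cases hxS : x ≤ S
      · rw [Set.indicator_of_mem, Set.indicator_of_mem]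
        · simp only [smul_eq_mul, abs_neg, abs_one, one_mul]
          rw [div_eq_mul_inv a x]
          ring
        · exact ⟨hx0, hxS⟩
        · exact mem_Ici.mpr ((inv_le_inv₀ hS hx0).mpr hxS)
      · have h1 : x⁻¹ ∉ Ici S⁻¹ := fun h => hxS ((inv_le_inv₀ hS hx0).mp (mem_Ici.mp h))
        have h2' : x ∉ Ioc (0:ℝ) S := fun h => hxS h.2
        rw [Set.indicator_of_notMem h1, Set.indicator_of_notMem h2']
        simp
    · rw [setIntegral_indicator measurableSet_Ioc,
        Set.inter_eq_self_of_subset_right Ioc_subset_Ioi_self]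
  have hR : (∫ y in Ioi (0:ℝ), (Ici S⁻¹).indicator (fun u => Real.exp (-(a * u))) y)
      = Real.exp (-(a / S)) / a := by
    have hsub : Ici S⁻¹ ⊆ Ioi (0:ℝ) := fun y hy => lt_of_lt_of_le (inv_pos.mpr hS) hy
    rw [setIntegral_indicator measurableSet_Ici,
      Set.inter_eq_self_of_subset_right hsub,
      integral_Ici_eq_integral_Ioi, intexp ha, ← div_eq_mul_inv]
  rw [← hL, key, hR]


lemma intA {b : ℝ} (hb : 0 < b) :
    ∫ θ in Ioi (0:ℝ), θ ^ (-(1:ℝ)/2) * Real.exp (-(b * θ))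
      = Real.sqrt π / Real.sqrt b := by
  have := Real.integral_rpow_mul_exp_neg_mul_Ioi (a := 1/2) (r := b) (by norm_num) hb
  rw [show ((1:ℝ)/2 - 1) = -(1:ℝ)/2 by norm_num] at this
  rw [this, Real.Gamma_one_half_eq, one_div, ← Real.sqrt_eq_rpow, Real.sqrt_inv,
    div_eq_mul_inv]
  ring

lemma gg_int' : IntegrableOn (fun θ => Real.exp (-3 * θ / 2) * (π * θ) ^ (-(1:ℝ)/2)) (Ioi (0:ℝ)) := by
  have h := integrableOn_rpow_mul_exp_neg_mul_rpow (p := 1) (s := -(1:ℝ)/2) (b := 3/2)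
    (by norm_num) (by norm_num) (by norm_num)
  have h3 : IntegrableOn
      (fun x : ℝ => π ^ (-(1:ℝ)/2) * (x ^ (-(1:ℝ)/2) * Real.exp (-(3/2) * x ^ (1:ℝ))))
      (Ioi 0) := h.const_mul _
  refine h3.congr_fun (fun x hx => ?_) measurableSet_Ioi
  have hx0 : (0:ℝ) < x := hx
  beta_reduce
  rw [Real.rpow_one, Real.mul_rpow pi_pos.le hx0.le, show -(3/2) * x = -3 * x / 2 by ring]
  ring


noncomputable def gg (θ : ℝ) : ℝ := Real.exp (-3 * θ / 2) * (π * θ) ^ (-(1:ℝ)/2)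
noncomputable def GG (w : ℝ) : ℝ := ∫ θ in Set.Ioc (0:ℝ) w, gg θ

lemma gg_nonneg {θ : ℝ} (hθ : 0 < θ) : 0 ≤ gg θ :=
  mul_nonneg (Real.exp_pos _).le (Real.rpow_nonneg (by positivity) _)

lemma gg_int : IntegrableOn gg (Ioi (0:ℝ)) := gg_int'

lemma GG_mono : Monotone GG := by
  intro w1 w2 h
  apply setIntegral_mono_set (gg_int.mono_set Ioc_subset_Ioi_self)
  · filter_upwards [ae_restrict_mem measurableSet_Ioc] with θ hθ using gg_nonneg hθ.1
  · exact Filter.Eventually.of_forall (Ioc_subset_Ioc_right h)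

lemma GG_nonneg (w : ℝ) : 0 ≤ GG w :=
  setIntegral_nonneg measurableSet_Ioc fun θ hθ => gg_nonneg hθ.1

lemma GG_le (w : ℝ) : GG w ≤ ∫ θ in Ioi (0:ℝ), gg θ := by
  apply setIntegral_mono_set gg_int
  · filter_upwards [ae_restrict_mem measurableSet_Ioi] with θ hθ using gg_nonneg hθ
  · exact Filter.Eventually.of_forall Ioc_subset_Ioi_self

lemma exp_sq_bound {x : ℝ} (hx : 0 ≤ x) : x ^ 2 / 2 ≤ Real.exp x := by
  have := Real.sum_le_exp_of_nonneg hx 3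
  simp [Finset.sum_range_succ] at this
  nlinarith [this]

lemma K_meas : Measurable fun s : ℝ => Real.exp (-(1 / s)) := by fun_prop

lemma K_meas' {a : ℝ} : Measurable fun s : ℝ => Real.exp (-(a / s)) / s ^ 2 :=
  ((measurable_const.div measurable_id).neg.exp).div (measurable_id.pow_const 2)

lemma K_bound {a s : ℝ} (ha : 0 < a) (hs0 : 0 < s) :
    Real.exp (-(a / s)) / s ^ 2 ≤ 2 / a ^ 2 := by
  have hb := exp_sq_bound (x := a / s) (by positivity)
  have hb' : a ^ 2 ≤ 2 * s ^ 2 * Real.exp (a / s) := by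
    have h3 : a ^ 2 / s ^ 2 / 2 ≤ Real.exp (a / s) := by
      rw [← div_pow]; exact hb
    calc a ^ 2 = a ^ 2 / s ^ 2 / 2 * (2 * s ^ 2) := by field_simp
    _ ≤ Real.exp (a / s) * (2 * s ^ 2) := mul_le_mul_of_nonneg_right h3 (by positivity)
    _ = 2 * s ^ 2 * Real.exp (a / s) := by ring
  rw [div_le_div_iff₀ (by positivity) (by positivity), Real.exp_neg,
    inv_mul_le_iff₀ (Real.exp_pos _)]
  nlinarith [hb']

lemma K_int {a : ℝ} (ha : 0 < a) :
    IntegrableOn (fun s => Real.exp (-(a / s)) / s ^ 2) (Ioi (0:ℝ)) := by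
  have h1 : IntegrableOn (fun s => Real.exp (-(a / s)) / s ^ 2) (Ioc (0:ℝ) 1) := by
    apply Measure.integrableOn_of_bounded (M := 2 / a ^ 2) (by simp)
      K_meas'.aestronglyMeasurable
    rw [ae_restrict_iff' measurableSet_Ioc]
    apply Filter.Eventually.of_forall
    intro s hs
    rw [Real.norm_eq_abs, abs_of_nonneg (by positivity)]
    exact K_bound ha hs.1
  have h2 : IntegrableOn (fun s => Real.exp (-(a / s)) / s ^ 2) (Ioi (1:ℝ)) := by
    have hrp : IntegrableOn (fun s : ℝ => s ^ (-2:ℝ)) (Ioi (1:ℝ)) :=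
      integrableOn_Ioi_rpow_of_lt (by norm_num) zero_lt_one
    apply Integrable.mono hrp K_meas'.aestronglyMeasurable
    rw [ae_restrict_iff' measurableSet_Ioi]
    apply Filter.Eventually.of_forall
    intro s hs
    have hs0 : (0:ℝ) < s := lt_trans zero_lt_one hs
    rw [Real.norm_eq_abs, Real.norm_eq_abs, abs_of_nonneg (by positivity),
      abs_of_nonneg (Real.rpow_nonneg hs0.le _)]
    rw [Real.rpow_neg hs0.le, show (2:ℝ) = ((2:ℕ):ℝ) by norm_num, Real.rpow_natCast]
    rw [div_le_iff₀ (by positivity), inv_mul_cancel₀ (by positivity)]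
    exact Real.exp_le_one_iff.mpr (neg_nonpos.mpr (le_of_lt (div_pos ha hs0)))
  have : Ioc (0:ℝ) 1 ∪ Ioi 1 = Ioi 0 := Ioc_union_Ioi_eq_Ioi zero_le_one
  rw [← this]
  exact h1.union h2




lemma gg_meas : Measurable gg := by
  unfold gg; fun_prop

section
variable {v : ℝ} (hv : 0 < v)

lemma ha' (hv : 0 < v) : 0 < 2 * (v ^ 2 - v + 1) := by nlinarith

noncomputable def ff (v : ℝ) : ℝ × ℝ → ℝ := fun q =>
  {q : ℝ × ℝ | q.1 * q.2 ≤ 4 * v}.indicator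
    (fun q => Real.exp (-(2 * (v ^ 2 - v + 1) / q.1)) / q.1 ^ 2 * gg q.2) q

lemma ff_meas : Measurable (ff v) := by
  apply Measurable.indicator
  · exact (K_meas'.comp measurable_fst).mul (gg_meas.comp measurable_snd)
  · exact measurableSet_le (measurable_fst.mul measurable_snd) measurable_const

lemma ff_int (hv : 0 < v) :
    Integrable (ff v) ((volume.restrict (Ioi 0)).prod (volume.restrict (Ioi 0))) := by
  apply Integrable.mono ((K_int (ha' hv)).mul_prod gg_int) (ff_meas).aestronglyMeasurable
  apply Filter.Eventually.of_forall
  intro q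
  exact norm_indicator_le_norm_self _ q

lemma slice_theta {s : ℝ} (hs : 0 < s) :
    ∫ θ, ff v (s, θ) ∂(volume.restrict (Ioi 0))
      = Real.exp (-(2 * (v ^ 2 - v + 1) / s)) / s ^ 2 * GG (4 * v / s) := by
  have heq : (fun θ => ff v (s, θ)) = fun θ => (Iic (4 * v / s)).indicator
      (fun θ => Real.exp (-(2 * (v ^ 2 - v + 1) / s)) / s ^ 2 * gg θ) θ := by
    funext θ
    by_cases h : s * θ ≤ 4 * v
    · rw [ff, Set.indicator_of_mem (show (s, θ) ∈ {q : ℝ × ℝ | q.1 * q.2 ≤ 4 * v} from h),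
        Set.indicator_of_mem (mem_Iic.mpr ((le_div_iff₀ hs).mpr (by linarith [mul_comm s θ])))]
    · rw [ff, Set.indicator_of_notMem
        (show (s, θ) ∉ {q : ℝ × ℝ | q.1 * q.2 ≤ 4 * v} from h), Set.indicator_of_notMem]
      intro hmem
      exact h (by have := (le_div_iff₀ hs).mp (mem_Iic.mp hmem); linarith [mul_comm s θ])
  rw [heq, integral_indicator measurableSet_Iic,
    Measure.restrict_restrict measurableSet_Iic, Set.inter_comm, Set.Ioi_inter_Iic,
    integral_const_mul]
  rfl

lemma slice_s (hv : 0 < v) {θ : ℝ} (hθ : 0 < θ) :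
    ∫ s, ff v (s, θ) ∂(volume.restrict (Ioi 0))
      = gg θ * (Real.exp (-(2 * (v ^ 2 - v + 1) * θ / (4 * v))) / (2 * (v ^ 2 - v + 1))) := by
  have hS : 0 < 4 * v / θ := by positivity
  have heq : (fun s => ff v (s, θ)) = fun s => (Iic (4 * v / θ)).indicator
      (fun s => Real.exp (-(2 * (v ^ 2 - v + 1) / s)) / s ^ 2 * gg θ) s := by
    funext s
    by_cases h : s * θ ≤ 4 * v
    · rw [ff, Set.indicator_of_mem (show (s, θ) ∈ {q : ℝ × ℝ | q.1 * q.2 ≤ 4 * v} from h),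
        Set.indicator_of_mem (mem_Iic.mpr ((le_div_iff₀ hθ).mpr h))]
    · rw [ff, Set.indicator_of_notMem
        (show (s, θ) ∉ {q : ℝ × ℝ | q.1 * q.2 ≤ 4 * v} from h), Set.indicator_of_notMem]
      intro hmem
      exact h ((le_div_iff₀ hθ).mp (mem_Iic.mp hmem))
  rw [heq, integral_indicator measurableSet_Iic,
    Measure.restrict_restrict measurableSet_Iic, Set.inter_comm, Set.Ioi_inter_Iic,
    integral_mul_const, intB (ha' hv) hS, mul_comm]
  congr 2
  rw [div_div_eq_mul_div]

end


section
variable {v : ℝ}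

lemma mcKean_pt (hv : 0 < v) {s : ℝ} (hs : 0 < s) :
    mcKean s v = (3 * v / (π * Real.sqrt 2)) *
      (Real.exp (-(2 * (v ^ 2 - v + 1) / s)) / s ^ 2 * GG (4 * v / s)) := by
  show (3 * v / (π * Real.sqrt 2 * s ^ 2)) * Real.exp (-2 * (v ^ 2 - v + 1) / s) *
      GG (4 * v / s) = _
  rw [show -2 * (v ^ 2 - v + 1) / s = -(2 * (v ^ 2 - v + 1) / s) by ring]
  have h1 : π * Real.sqrt 2 ≠ 0 := by positivity
  field_simp

lemma marginal (hv : 0 < v) :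
    IntegrableOn (fun s => mcKean s v) (Ioi 0) ∧
    ∫ s in Ioi (0:ℝ), mcKean s v = 3 / (2 * π) * v ^ ((3:ℝ)/2) / (1 + v ^ (3:ℕ)) := by
  set a := 2 * (v ^ 2 - v + 1) with ha_def
  have ha : 0 < a := ha' hv
  set μ := volume.restrict (Ioi (0:ℝ)) with hμ
  constructor
  · have hint0 : Integrable (fun s => ∫ θ, ff v (s, θ) ∂μ) μ := (ff_int hv).integral_prod_left
    apply (hint0.const_mul (3 * v / (π * Real.sqrt 2))).congr
    filter_upwards [ae_restrict_mem measurableSet_Ioi] with s hs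
    rw [mcKean_pt hv hs, slice_theta hs]
  · have h1 : ∫ s in Ioi (0:ℝ), mcKean s v = (3 * v / (π * Real.sqrt 2)) *
        ∫ s in Ioi (0:ℝ), Real.exp (-(a / s)) / s ^ 2 * GG (4 * v / s) := by
      rw [← integral_const_mul]
      exact setIntegral_congr_fun measurableSet_Ioi fun s hs => mcKean_pt hv hs
    have h2 : ∫ s in Ioi (0:ℝ), Real.exp (-(a / s)) / s ^ 2 * GG (4 * v / s)
        = ∫ s in Ioi (0:ℝ), ∫ θ, ff v (s, θ) ∂μ :=
      setIntegral_congr_fun measurableSet_Ioi fun s hs => (slice_theta hs).symm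
    have h3 : ∫ s in Ioi (0:ℝ), ∫ θ, ff v (s, θ) ∂μ
        = ∫ θ in Ioi (0:ℝ), ∫ s, ff v (s, θ) ∂μ :=
      integral_integral_swap (ff_int hv)
    have h4 : ∫ θ in Ioi (0:ℝ), ∫ s, ff v (s, θ) ∂μ
        = ∫ θ in Ioi (0:ℝ), gg θ * (Real.exp (-(a * θ / (4 * v))) / a) :=
      setIntegral_congr_fun measurableSet_Ioi fun θ hθ => slice_s hv hθ
    have h5 : ∫ θ in Ioi (0:ℝ), gg θ * (Real.exp (-(a * θ / (4 * v))) / a)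
        = (1 / a) * π ^ (-(1:ℝ)/2) *
          ∫ θ in Ioi (0:ℝ), θ ^ (-(1:ℝ)/2) * Real.exp (-((3/2 + a / (4 * v)) * θ)) := by
      rw [← integral_const_mul]
      apply setIntegral_congr_fun measurableSet_Ioi
      intro θ hθ
      have hθ0 : (0:ℝ) < θ := hθ
      have e1 : Real.exp (-3 * θ / 2) * Real.exp (-(a * θ / (4 * v)))
          = Real.exp (-((3/2 + a / (4 * v)) * θ)) := by
        rw [← Real.exp_add]
        congr 1
        field_simp
        ring
      show gg θ * _ = _
      beta_reduce
      rw [gg, Real.mul_rpow pi_pos.le hθ0.le, ← e1]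
      ring
    have hb : 0 < 3/2 + a / (4 * v) := by positivity
    rw [h1, h2, h3, h4, h5, intA hb]
    have hbval : 3/2 + a / (4 * v) = (v + 1) ^ 2 / (2 * v) := by
      rw [ha_def]; field_simp; ring
    rw [hbval, Real.sqrt_div (by positivity) _, Real.sqrt_sq (by linarith),
      Real.sqrt_mul (by norm_num) v,
      show (-(1:ℝ)/2) = -((1:ℝ)/2) by norm_num, Real.rpow_neg pi_pos.le,
      ← Real.sqrt_eq_rpow,
      show v ^ ((3:ℝ)/2) = v * Real.sqrt v by
        rw [show (3:ℝ)/2 = 1 + 1/2 by norm_num, Real.rpow_add hv, Real.rpow_one,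
          ← Real.sqrt_eq_rpow]]
    have hπ : Real.sqrt π ≠ 0 := by positivity
    have h2' : Real.sqrt 2 ≠ 0 := by positivity
    have hvs : Real.sqrt v ≠ 0 := by positivity
    have hv1 : v + 1 ≠ 0 := by linarith
    have hv3 : 1 + v ^ (3:ℕ) ≠ 0 := by positivity
    have hcube : a * (v + 1) = 2 * (1 + v ^ (3:ℕ)) := by rw [ha_def]; ring
    field_simp
    linear_combination (-(3 * v * Real.sqrt v * Real.sqrt π * Real.sqrt 2 * π)) * hcube

end


noncomputable def hh : ℝ × ℝ → ℝ := fun p =>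
  p.2 ^ (-(1:ℝ)/6) * Real.exp (-((1 + p.2) * p.1))

lemma hh_meas : Measurable hh := by unfold hh; fun_prop

lemma hh_slice_int {t : ℝ} (ht : 0 < t) :
    Integrable (fun u => hh (t, u)) (volume.restrict (Ioi 0)) := by
  have base := integrableOn_rpow_mul_exp_neg_mul_rpow (p := 1) (s := -(1:ℝ)/6) (b := t)
    (by norm_num) (by norm_num) ht
  have h2 : IntegrableOn (fun x : ℝ => Real.exp (-t) * (x ^ (-(1:ℝ)/6) *
      Real.exp (-t * x ^ (1:ℝ)))) (Ioi 0) := base.const_mul _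
  refine h2.congr_fun (fun x hx => ?_) measurableSet_Ioi
  show Real.exp (-t) * (x ^ (-(1:ℝ)/6) * Real.exp (-t * x ^ (1:ℝ)))
      = x ^ (-(1:ℝ)/6) * Real.exp (-((1 + x) * t))
  rw [Real.rpow_one, show -((1 + x) * t) = -t + -t * x by ring, Real.exp_add]
  ring

lemma hh_slice_val {t : ℝ} (ht : 0 < t) :
    ∫ u, hh (t, u) ∂(volume.restrict (Ioi 0))
      = Real.Gamma (5/6) * (t ^ (-(5:ℝ)/6) * Real.exp (-t)) := by
  have key := Real.integral_rpow_mul_exp_neg_mul_Ioi (a := 5/6) (r := t) (by norm_num) ht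
  rw [show ((5:ℝ)/6 - 1) = -(1:ℝ)/6 by norm_num] at key
  have h1 : ∫ u, hh (t, u) ∂(volume.restrict (Ioi 0))
      = Real.exp (-t) * ∫ u in Ioi (0:ℝ), u ^ (-(1:ℝ)/6) * Real.exp (-(t * u)) := by
    rw [← integral_const_mul]
    apply setIntegral_congr_fun measurableSet_Ioi
    intro x hx
    show hh (t, x) = _
    rw [hh, show -((1 + x) * t) = -t + -(t * x) by ring, Real.exp_add]
    ring
  rw [h1, key, one_div, Real.inv_rpow ht.le, ← Real.rpow_neg ht.le,
    show -((5:ℝ)/6) = -(5:ℝ)/6 by norm_num]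
  ring

lemma hh_int : Integrable hh
    ((volume.restrict (Ioi 0)).prod (volume.restrict (Ioi 0))) := by
  rw [integrable_prod_iff hh_meas.aestronglyMeasurable]
  constructor
  · filter_upwards [ae_restrict_mem measurableSet_Ioi] with t ht
    exact hh_slice_int ht
  · have base := integrableOn_rpow_mul_exp_neg_mul_rpow (p := 1) (s := -(5:ℝ)/6) (b := 1)
      (by norm_num) (by norm_num) one_pos
    have h2 : IntegrableOn (fun t : ℝ => Real.Gamma (5/6) * (t ^ (-(5:ℝ)/6) *
        Real.exp (-(1:ℝ) * t ^ (1:ℝ)))) (Ioi 0) := base.const_mul _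
    apply h2.congr
    filter_upwards [ae_restrict_mem measurableSet_Ioi] with t ht
    have ht0 : (0:ℝ) < t := ht
    have hnorm : ∫ u, ‖hh (t, u)‖ ∂(volume.restrict (Ioi 0))
        = ∫ u, hh (t, u) ∂(volume.restrict (Ioi 0)) := by
      apply setIntegral_congr_fun measurableSet_Ioi
      intro x hx
      have hx0 : (0:ℝ) < x := hx
      show ‖hh (t, x)‖ = hh (t, x)
      rw [Real.norm_eq_abs, abs_of_nonneg]
      exact mul_nonneg (Real.rpow_nonneg hx0.le _) (Real.exp_pos _).le
    rw [hnorm, hh_slice_val ht0, Real.rpow_one, neg_one_mul]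

lemma intE : ∫ u in Ioi (0:ℝ), u ^ (-(1:ℝ)/6) / (1 + u) = 2 * π := by
  have hval1 : ∫ z, hh z ∂((volume.restrict (Ioi (0:ℝ))).prod (volume.restrict (Ioi (0:ℝ))))
      = Real.Gamma (5/6) * Real.Gamma (1/6) := by
    rw [integral_prod _ hh_int]
    have : ∀ t ∈ Ioi (0:ℝ), (∫ u, hh (t, u) ∂(volume.restrict (Ioi 0)))
        = Real.Gamma (5/6) * (t ^ ((1:ℝ)/6 - 1) * Real.exp (-(1 * t))) := by
      intro t ht
      rw [hh_slice_val ht, show ((1:ℝ)/6 - 1) = -(5:ℝ)/6 by norm_num, one_mul]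
    rw [setIntegral_congr_fun measurableSet_Ioi this, integral_const_mul,
      Real.integral_rpow_mul_exp_neg_mul_Ioi (by norm_num) one_pos]
    norm_num
  have hval2 : ∫ z, hh z ∂((volume.restrict (Ioi (0:ℝ))).prod (volume.restrict (Ioi (0:ℝ))))
      = ∫ u in Ioi (0:ℝ), u ^ (-(1:ℝ)/6) / (1 + u) := by
    rw [integral_prod_symm _ hh_int]
    apply setIntegral_congr_fun measurableSet_Ioi
    intro u hu
    have hu0 : (0:ℝ) < u := hu
    have h1u : (0:ℝ) < 1 + u := by linarith
    show (∫ t, hh (t, u) ∂(volume.restrict (Ioi 0))) = u ^ (-(1:ℝ)/6) / (1 + u)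
    have : (fun t => hh (t, u)) = fun t => u ^ (-(1:ℝ)/6) * Real.exp (-((1 + u) * t)) := rfl
    rw [this, integral_const_mul, intexp h1u 0]
    rw [mul_zero, neg_zero, Real.exp_zero]
    ring
  have hgamma : Real.Gamma (5/6) * Real.Gamma (1/6) = 2 * π := by
    have := Real.Gamma_mul_Gamma_one_sub (5/6)
    rw [show (1:ℝ) - 5/6 = 1/6 by norm_num] at this
    rw [this, show π * (5/6) = π - π/6 by ring, Real.sin_pi_sub, Real.sin_pi_div_six]
    ring
  rw [← hval2, hval1, hgamma]

lemma intD : ∫ v in Ioi (0:ℝ), v ^ ((3:ℝ)/2) / (1 + v ^ (3:ℕ)) = 2 * π / 3 := by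
  have key := integral_comp_rpow_Ioi (g := fun u => u ^ (-(1:ℝ)/6) / (1 + u))
    (p := 3) (by norm_num)
  have hL : (∫ x in Ioi (0:ℝ), (|(3:ℝ)| * x ^ ((3:ℝ) - 1)) •
        ((fun u => u ^ (-(1:ℝ)/6) / (1 + u)) (x ^ (3:ℝ))))
      = 3 * ∫ v in Ioi (0:ℝ), v ^ ((3:ℝ)/2) / (1 + v ^ (3:ℕ)) := by
    rw [← integral_const_mul]
    apply setIntegral_congr_fun measurableSet_Ioi
    intro x hx
    have hx0 : (0:ℝ) < x := hx
    show (|(3:ℝ)| * x ^ ((3:ℝ) - 1)) * ((x ^ (3:ℝ)) ^ (-(1:ℝ)/6) / (1 + x ^ (3:ℝ)))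
        = 3 * (x ^ ((3:ℝ)/2) / (1 + x ^ (3:ℕ)))
    have h3 : x ^ (3:ℝ) = x ^ (3:ℕ) := by
      rw [← Real.rpow_natCast x 3]; norm_num
    have hpow : (x ^ (3:ℝ)) ^ (-(1:ℝ)/6) = x ^ (-(1:ℝ)/2) := by
      rw [← Real.rpow_mul hx0.le]; norm_num
    have hcomb : x ^ ((3:ℝ) - 1) * x ^ (-(1:ℝ)/2) = x ^ ((3:ℝ)/2) := by
      rw [← Real.rpow_add hx0]; norm_num
    rw [hpow, h3, abs_of_nonneg (by norm_num : (0:ℝ) ≤ 3)]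
    rw [← hcomb]
    ring
  rw [hL] at key
  rw [intE] at key
  linarith

lemma mcKean_nonneg' : ∀ s v : ℝ, 0 < s → 0 < v → 0 ≤ mcKean s v := by
  intro s v hs hv
  unfold mcKean
  apply mul_nonneg (mul_nonneg (by positivity) (Real.exp_pos _).le)
  apply setIntegral_nonneg measurableSet_Ioc
  intro θ hθ
  exact mul_nonneg (Real.exp_pos _).le (Real.rpow_nonneg (mul_nonneg pi_pos.le hθ.1.le) _)

lemma GG_meas : Measurable GG := GG_mono.measurable

lemma mcKean_uncurry_meas : Measurable (fun p : ℝ × ℝ => mcKean p.1 p.2) := by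
  have : (fun p : ℝ × ℝ => mcKean p.1 p.2) = fun p : ℝ × ℝ =>
      (3 * p.2 / (π * Real.sqrt 2 * p.1 ^ 2)) *
        Real.exp (-2 * (p.2 ^ 2 - p.2 + 1) / p.1) * GG (4 * p.2 / p.1) := rfl
  rw [this]
  apply Measurable.mul
  · apply Measurable.mul
    · exact (measurable_const.mul measurable_snd).div
        (measurable_const.mul (measurable_fst.pow_const 2))
    · exact (((measurable_const.mul (((measurable_snd.pow_const 2).sub
        measurable_snd).add measurable_const)).div measurable_fst)).exp
  · exact GG_meas.comp ((measurable_const.mul measurable_snd).div measurable_fst)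

lemma M_int : IntegrableOn
    (fun v : ℝ => 3 / (2 * π) * v ^ ((3:ℝ)/2) / (1 + v ^ (3:ℕ))) (Ioi (0:ℝ)) := by
  have hmeas : Measurable (fun v : ℝ => 3 / (2 * π) * v ^ ((3:ℝ)/2) / (1 + v ^ (3:ℕ))) := by
    apply Measurable.div
    · exact measurable_const.mul (measurable_id.pow_const _)
    · exact measurable_const.add (measurable_id.pow_const 3)
  have h1 : IntegrableOn (fun v : ℝ => 3 / (2 * π) * v ^ ((3:ℝ)/2) / (1 + v ^ (3:ℕ)))
      (Ioc (0:ℝ) 1) := by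
    apply Measure.integrableOn_of_bounded (M := 3 / (2 * π)) (by simp)
      hmeas.aestronglyMeasurable
    rw [ae_restrict_iff' measurableSet_Ioc]
    apply Filter.Eventually.of_forall
    intro x hx
    have hx0 : (0:ℝ) < x := hx.1
    rw [Real.norm_eq_abs, abs_of_nonneg (by positivity)]
    have hr : x ^ ((3:ℝ)/2) ≤ 1 := Real.rpow_le_one hx0.le hx.2 (by norm_num)
    have hd : (1:ℝ) ≤ 1 + x ^ (3:ℕ) := by nlinarith [pow_pos hx0 3]
    calc 3 / (2 * π) * x ^ ((3:ℝ)/2) / (1 + x ^ (3:ℕ))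
        ≤ 3 / (2 * π) * 1 / 1 := by
          gcongr
          all_goals first
            | positivity
            | linarith
    _ = 3 / (2 * π) := by ring
  have h2 : IntegrableOn (fun v : ℝ => 3 / (2 * π) * v ^ ((3:ℝ)/2) / (1 + v ^ (3:ℕ)))
      (Ioi (1:ℝ)) := by
    have hrp : IntegrableOn (fun v : ℝ => 3 / (2 * π) * v ^ (-(3:ℝ)/2)) (Ioi (1:ℝ)) :=
      (integrableOn_Ioi_rpow_of_lt (by norm_num) zero_lt_one).const_mul _
    apply Integrable.mono hrp hmeas.aestronglyMeasurable
    rw [ae_restrict_iff' measurableSet_Ioi]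
    apply Filter.Eventually.of_forall
    intro x hx
    have hx0 : (0:ℝ) < x := lt_trans zero_lt_one hx
    rw [Real.norm_eq_abs, Real.norm_eq_abs, abs_of_nonneg (by positivity),
      abs_of_nonneg (by positivity)]
    have hxp : (0:ℝ) < x ^ (3:ℕ) := pow_pos hx0 3
    have hkey : x ^ ((3:ℝ)/2) / (1 + x ^ (3:ℕ)) ≤ x ^ (-(3:ℝ)/2) := by
      have e1 : x ^ (-(3:ℝ)/2) = x ^ ((3:ℝ)/2) / x ^ (3:ℕ) := by
        rw [← Real.rpow_natCast x 3, ← Real.rpow_sub hx0]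
        norm_num
      rw [e1]
      gcongr
      all_goals first
        | exact Real.rpow_nonneg hx0.le _
        | linarith
    calc 3 / (2 * π) * x ^ ((3:ℝ)/2) / (1 + x ^ (3:ℕ))
        = 3 / (2 * π) * (x ^ ((3:ℝ)/2) / (1 + x ^ (3:ℕ))) := by ring
    _ ≤ 3 / (2 * π) * x ^ (-(3:ℝ)/2) := by
        apply mul_le_mul_of_nonneg_left hkey (by positivity)
  rw [← Ioc_union_Ioi_eq_Ioi (zero_le_one)]
  exact h1.union h2

lemma mcKean_prod_int : Integrable (fun p : ℝ × ℝ => mcKean p.1 p.2)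
    ((volume.restrict (Ioi (0:ℝ))).prod (volume.restrict (Ioi (0:ℝ)))) := by
  rw [integrable_prod_iff' mcKean_uncurry_meas.aestronglyMeasurable]
  constructor
  · filter_upwards [ae_restrict_mem measurableSet_Ioi] with v hv
    exact (marginal hv).1
  · apply M_int.congr
    filter_upwards [ae_restrict_mem measurableSet_Ioi] with v hv
    have h1 : (∫ s, ‖mcKean s v‖ ∂(volume.restrict (Ioi (0:ℝ))))
        = ∫ s, mcKean s v ∂(volume.restrict (Ioi (0:ℝ))) := by
      apply setIntegral_congr_fun measurableSet_Ioi
      intro s hs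
      show ‖mcKean s v‖ = mcKean s v
      rw [Real.norm_eq_abs, abs_of_nonneg (mcKean_nonneg' s v hs hv)]
    rw [h1, (marginal hv).2]

theorem stmt_10 :
    (∀ s v : ℝ, 0 < s → 0 < v → 0 ≤ mcKean s v) ∧
    (∫ p in (Set.Ioi (0:ℝ)) ×ˢ (Set.Ioi (0:ℝ)), mcKean p.1 p.2) = 1 ∧
    (∀ v : ℝ, 0 < v →
      (∫ s in Set.Ioi (0:ℝ), mcKean s v)
        = (3 / (2 * π)) * v ^ ((3:ℝ)/2) / (1 + v ^ (3:ℕ))) := by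
  refine ⟨mcKean_nonneg', ?_, fun v hv => (marginal hv).2⟩
  rw [Measure.volume_eq_prod, ← Measure.prod_restrict,
    integral_prod_symm _ mcKean_prod_int]
  have hstep : ∀ v ∈ Ioi (0:ℝ), (∫ s, mcKean s v ∂(volume.restrict (Ioi (0:ℝ))))
      = 3 / (2 * π) * v ^ ((3:ℝ)/2) / (1 + v ^ (3:ℕ)) := fun v hv => (marginal hv).2
  rw [setIntegral_congr_fun measurableSet_Ioi hstep]
  have : ∀ v ∈ Ioi (0:ℝ), 3 / (2 * π) * v ^ ((3:ℝ)/2) / (1 + v ^ (3:ℕ))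
      = 3 / (2 * π) * (v ^ ((3:ℝ)/2) / (1 + v ^ (3:ℕ))) := fun v hv => by ring
  rw [setIntegral_congr_fun measurableSet_Ioi this, integral_const_mul, intD]
  field_simp
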